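/- E-identity of the pseudospectral update rule: with the notation of the pseudospectral discretization (F the n×n normalized DFT matrix; d ∈ ℂⁿ with every d_s nonzero and purely imaginary; D = diag(d); α ∈ ℝ; H = Id − α·D²; B_k = F·I_k·F⁻¹·D; U^♭ the flat of U), define E_{ip} = Tr(B_i^♭·B_p*). Then for every X ∈ ℂⁿ and every index p, Σ_i X_i·E_{ip} = (1/n)·(F·H·F⁻¹·X)_p. -/

import Mathlib

open Matrix

private lemma dft_orth (n : ℕ) (hn : 0 < n) (j k : Fin n) :
    ∑ s : Fin n, Complex.exp (2 * Real.pi * Complex.I * (j : ℕ) * (s : ℕ) / n) *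
      Complex.exp (-(2 * Real.pi * Complex.I * (s : ℕ) * (k : ℕ) / n)) =
      if j = k then (n : ℂ) else 0 := by
  have hnC : (n : ℂ) ≠ 0 := Nat.cast_ne_zero.mpr hn.ne'
  set c : ℂ := 2 * Real.pi * Complex.I * ((j : ℂ) - (k : ℂ)) / n with hc
  have hterm : ∀ s : Fin n,
      Complex.exp (2 * Real.pi * Complex.I * (j : ℕ) * (s : ℕ) / n) *
        Complex.exp (-(2 * Real.pi * Complex.I * (s : ℕ) * (k : ℕ) / n)) =
        Complex.exp c ^ (s : ℕ) := by
    intro s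
    rw [← Complex.exp_nat_mul, ← Complex.exp_add]
    congr 1
    rw [hc]
    ring
  rw [Finset.sum_congr rfl fun s _ => hterm s]
  rw [Fin.sum_univ_eq_sum_range (fun i => Complex.exp c ^ i) n]
  by_cases h : j = k
  · subst h
    simp [hc]
  · have hne : Complex.exp c ≠ 1 := by
      intro h1
      obtain ⟨m, hm⟩ := Complex.exp_eq_one_iff.mp h1
      have : (j : ℂ) - (k : ℂ) = (m : ℂ) * n := by
        have h2 : 2 * Real.pi * Complex.I * ((j : ℂ) - (k : ℂ)) =
            2 * Real.pi * Complex.I * ((m : ℂ) * n) := by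
          rw [hc, div_eq_iff hnC] at hm
          linear_combination hm
        exact mul_left_cancel₀ Complex.two_pi_I_ne_zero h2
      have hzz : (j : ℤ) - (k : ℤ) = m * n := by exact_mod_cast this
      have hj : (j : ℤ) < n := by exact_mod_cast j.2
      have hk : (k : ℤ) < n := by exact_mod_cast k.2
      have hj0 : 0 ≤ (j : ℤ) := by positivity
      have hk0 : 0 ≤ (k : ℤ) := by positivity
      have hjk : (j : ℤ) ≠ (k : ℤ) := by
        simpa [Fin.ext_iff] using h
      have habs : |m * (n : ℤ)| < n := by
        rw [← hzz]; rw [abs_lt]; omega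
      have hm0 : m ≠ 0 := by
        intro h0; rw [h0] at hzz; omega
      have : (n : ℤ) ≤ |m * n| := by
        rw [abs_mul, abs_of_nonneg (by positivity : (0:ℤ) ≤ (n:ℤ))]
        nlinarith [Int.one_le_abs hm0]
      omega
    have hpow : Complex.exp c ^ n = 1 := by
      rw [← Complex.exp_nat_mul]
      apply Complex.exp_eq_one_iff.mpr
      refine ⟨(j : ℤ) - (k : ℤ), ?_⟩
      rw [hc, mul_div_assoc', mul_div_right_comm, div_self hnC, one_mul]
      push_cast
      ring
    rw [geom_sum_eq hne, hpow]
    simp [h]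

theorem pseudospectral_E_identity (n : ℕ) (hn : 0 < n)
    (F : Matrix (Fin n) (Fin n) ℂ)
    (hF : ∀ j k : Fin n, F j k =
      (Real.sqrt n : ℂ)⁻¹ *
        Complex.exp (2 * Real.pi * Complex.I * (j : ℕ) * (k : ℕ) / n))
    (d : Fin n → ℂ) (hd0 : ∀ s, d s ≠ 0)
    (hdim : ∀ s, (starRingEnd ℂ) (d s) = -d s)
    (α : ℝ)
    (D H : Matrix (Fin n) (Fin n) ℂ)
    (hD : D = Matrix.diagonal d)
    (hH : H = 1 - (α : ℂ) • D ^ 2)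
    (B : Fin n → Matrix (Fin n) (Fin n) ℂ)
    (hB : ∀ k, B k =
      F * Matrix.diagonal (fun i => if i = k then (1 : ℂ) else 0) * F⁻¹ * D)
    (flat : Matrix (Fin n) (Fin n) ℂ → Matrix (Fin n) (Fin n) ℂ)
    (hflat : ∀ (U : Matrix (Fin n) (Fin n) ℂ) (i s : Fin n),
      flat U i s =
        if i = (⟨0, hn⟩ : Fin n) then
          U ⟨0, hn⟩ s * ((α : ℂ) - ((d s) ^ 2)⁻¹)
        else 0)
    (E : Fin n → Fin n → ℂ)
    (hE : ∀ i p, E i p = Matrix.trace (flat (B i) * (B p)ᴴ))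
    (X : Fin n → ℂ) (p : Fin n) :
    ∑ i, X i * E i p = (n : ℂ)⁻¹ * ((F * H * F⁻¹) *ᵥ X) p := by
  have hnC : (n : ℂ) ≠ 0 := Nat.cast_ne_zero.mpr hn.ne'
  set z : Fin n := ⟨0, hn⟩ with hz
  set G : Matrix (Fin n) (Fin n) ℂ :=
    Matrix.of fun s k : Fin n => (Real.sqrt n : ℂ)⁻¹ *
      Complex.exp (-(2 * Real.pi * Complex.I * (s : ℕ) * (k : ℕ) / n)) with hG
  have hsq : ((Real.sqrt n : ℝ) : ℂ)⁻¹ * ((Real.sqrt n : ℝ) : ℂ)⁻¹ = (n : ℂ)⁻¹ := by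
    rw [← mul_inv, ← Complex.ofReal_mul, Real.mul_self_sqrt (Nat.cast_nonneg n)]
    norm_num
  have hFG : F * G = 1 := by
    ext j k
    rw [Matrix.mul_apply]
    have hterm : ∀ s : Fin n, F j s * G s k =
        ((Real.sqrt n : ℝ) : ℂ)⁻¹ * ((Real.sqrt n : ℝ) : ℂ)⁻¹ *
          (Complex.exp (2 * Real.pi * Complex.I * (j : ℕ) * (s : ℕ) / n) *
            Complex.exp (-(2 * Real.pi * Complex.I * (s : ℕ) * (k : ℕ) / n))) := by
      intro s
      rw [hF, hG]
      simp only [Matrix.of_apply]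
      ring
    rw [Finset.sum_congr rfl fun s _ => hterm s, ← Finset.mul_sum, dft_orth n hn j k, hsq,
      Matrix.one_apply]
    by_cases h : j = k <;> simp [h, hnC]
  have hFinv : F⁻¹ = G := Matrix.inv_eq_right_inv hFG
  have hBe : ∀ k s, B k z s =
      (n : ℂ)⁻¹ * Complex.exp (-(2 * Real.pi * Complex.I * (k : ℕ) * (s : ℕ) / n)) * d s := by
    intro k s
    rw [hB k, hFinv, hD, Matrix.mul_diagonal, Matrix.mul_apply]
    rw [Finset.sum_eq_single k (fun t _ ht => by
        rw [Matrix.mul_diagonal]; simp [ht])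
      (fun h => absurd (Finset.mem_univ k) h)]
    rw [Matrix.mul_diagonal]
    simp only [if_pos rfl, eq_self_iff_true, if_true, mul_one, hF, hG, Matrix.of_apply]
    have hz0 : ((z : ℕ) : ℂ) = 0 := by simp [hz]
    rw [hz0]
    rw [show (2 * Real.pi * Complex.I * 0 * ((k : ℕ) : ℂ) / n : ℂ) = 0 from by ring,
      Complex.exp_zero]
    linear_combination Complex.exp (-(2 * Real.pi * Complex.I * ((k : ℕ) : ℂ) *
      ((s : ℕ) : ℂ) / n)) * d s * hsq
  have hconjexp : ∀ (a b : Fin n),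
      (starRingEnd ℂ) (Complex.exp (-(2 * Real.pi * Complex.I * (a : ℕ) * (b : ℕ) / n))) =
        Complex.exp (2 * Real.pi * Complex.I * (a : ℕ) * (b : ℕ) / n) := by
    intro a b
    have harg : (starRingEnd ℂ) (-(2 * Real.pi * Complex.I * ((a : ℕ) : ℂ) *
        ((b : ℕ) : ℂ) / n)) = 2 * Real.pi * Complex.I * (a : ℕ) * (b : ℕ) / n := by
      simp only [map_neg, map_div₀, _root_.map_mul, Complex.conj_I, Complex.conj_ofReal,
        map_natCast, map_ofNat]
      ring
    rw [← Complex.exp_conj, harg]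
  have hEe : ∀ i : Fin n, E i p =
      ∑ s : Fin n, (n : ℂ)⁻¹ * (n : ℂ)⁻¹ *
        Complex.exp (2 * Real.pi * Complex.I * (p : ℕ) * (s : ℕ) / n) *
        Complex.exp (-(2 * Real.pi * Complex.I * (i : ℕ) * (s : ℕ) / n)) *
        (1 - (α : ℂ) * d s ^ 2) := by
    intro i
    rw [hE, Matrix.trace]
    simp only [Matrix.diag_apply, Matrix.mul_apply, Matrix.conjTranspose_apply]
    rw [Finset.sum_eq_single z (fun j _ hj => by
      apply Finset.sum_eq_zero
      intro s _
      rw [hflat]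
      simp [hj]) (fun h => absurd (Finset.mem_univ z) h)]
    apply Finset.sum_congr rfl
    intro s _
    rw [hflat, if_pos rfl, hBe i s, hBe p s]
    simp only [RCLike.star_def, _root_.map_mul, hconjexp, hdim, map_inv₀, Complex.conj_natCast]
    have h1 : (d s ^ 2) * (d s ^ 2)⁻¹ = 1 :=
      mul_inv_cancel₀ (pow_ne_zero 2 (hd0 s))
    linear_combination (n : ℂ)⁻¹ * (n : ℂ)⁻¹ *
      Complex.exp (2 * Real.pi * Complex.I * ((p : ℕ) : ℂ) * ((s : ℕ) : ℂ) / n) *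
      Complex.exp (-(2 * Real.pi * Complex.I * ((i : ℕ) : ℂ) * ((s : ℕ) : ℂ) / n)) * h1
  have hHd : H = Matrix.diagonal (fun s => 1 - (α : ℂ) * d s ^ 2) := by
    rw [hH, hD, sq, Matrix.diagonal_mul_diagonal]
    ext a b
    rcases eq_or_ne a b with h | h
    · subst h
      rw [Matrix.sub_apply, Matrix.smul_apply, Matrix.one_apply_eq, Matrix.diagonal_apply_eq,
        Matrix.diagonal_apply_eq, smul_eq_mul]
      ring
    · rw [Matrix.sub_apply, Matrix.smul_apply, Matrix.one_apply_ne h,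
        Matrix.diagonal_apply_ne _ h, Matrix.diagonal_apply_ne _ h, smul_eq_mul]
      ring
  calc ∑ i, X i * E i p
      = ∑ i, ∑ s : Fin n, X i * ((n : ℂ)⁻¹ * (n : ℂ)⁻¹ *
          Complex.exp (2 * Real.pi * Complex.I * (p : ℕ) * (s : ℕ) / n) *
          Complex.exp (-(2 * Real.pi * Complex.I * (i : ℕ) * (s : ℕ) / n)) *
          (1 - (α : ℂ) * d s ^ 2)) := by
        refine Finset.sum_congr rfl fun i _ => ?_
        rw [hEe, Finset.mul_sum]
    _ = (n : ℂ)⁻¹ * ((F * H * F⁻¹) *ᵥ X) p := by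
        rw [hFinv, hHd]
        simp only [Matrix.mulVec, dotProduct]
        rw [Finset.mul_sum]
        refine Finset.sum_congr rfl fun i _ => ?_
        rw [Matrix.mul_apply]
        simp only [Matrix.mul_diagonal, hG, Matrix.of_apply, hF]
        rw [Finset.sum_mul, Finset.mul_sum]
        refine Finset.sum_congr rfl fun s _ => ?_
        rw [show (-(2 * Real.pi * Complex.I * ((s : ℕ) : ℂ) * ((i : ℕ) : ℂ) / n) : ℂ) =
          -(2 * Real.pi * Complex.I * ((i : ℕ) : ℂ) * ((s : ℕ) : ℂ) / n) from by ring]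
        linear_combination -X i * Complex.exp (2 * Real.pi * Complex.I * ((p : ℕ) : ℂ) *
          ((s : ℕ) : ℂ) / n) * Complex.exp (-(2 * Real.pi * Complex.I * ((i : ℕ) : ℂ) *
          ((s : ℕ) : ℂ) / n)) * (1 - (α : ℂ) * d s ^ 2) * (n : ℂ)⁻¹ * hsq
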